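/- For every r ≥ 1, the identity map id_r : M_r(ℂ) → M_r(ℂ) is an exposed positive linear map. -/

import Mathlib

open Matrix ComplexOrder

noncomputable section

/-- A linear map between matrix algebras is positive if it sends positive
semidefinite matrices to positive semidefinite matrices. -/
def IsPosMap {m n : ℕ} (φ : Matrix (Fin m) (Fin m) ℂ →ₗ[ℂ] Matrix (Fin n) (Fin n) ℂ) : Prop :=
  ∀ a : Matrix (Fin m) (Fin m) ℂ, a.PosSemidef → (φ a).PosSemidef

/-- A positive linear map `φ` is exposed (generates an exposed ray of the cone of
positive maps) if every positive map `ψ` such that `⟨η, φ(a) η⟩ = 0` implies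
`⟨η, ψ(a) η⟩ = 0` (for `a` positive semidefinite) is a nonnegative multiple of `φ`. -/
def IsExposedMap {m n : ℕ} (φ : Matrix (Fin m) (Fin m) ℂ →ₗ[ℂ] Matrix (Fin n) (Fin n) ℂ) :
    Prop :=
  IsPosMap φ ∧
    ∀ ψ : Matrix (Fin m) (Fin m) ℂ →ₗ[ℂ] Matrix (Fin n) (Fin n) ℂ, IsPosMap ψ →
      (∀ a : Matrix (Fin m) (Fin m) ℂ, a.PosSemidef → ∀ η : Fin n → ℂ,
        star η ⬝ᵥ (φ a) *ᵥ η = 0 → star η ⬝ᵥ (ψ a) *ᵥ η = 0) →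
      ∃ c : ℝ, 0 ≤ c ∧ ψ = (c : ℂ) • φ

/-- The map `Ad_s : x ↦ s* x s`. -/
def adMap {m n : ℕ} (s : Matrix (Fin m) (Fin n) ℂ) :
    Matrix (Fin m) (Fin m) ℂ →ₗ[ℂ] Matrix (Fin n) (Fin n) ℂ where
  toFun x := sᴴ * x * s
  map_add' x y := by simp [Matrix.add_mul, Matrix.mul_add]
  map_smul' c x := by simp [Matrix.smul_mul, Matrix.mul_smul]

/-- The transpose map on matrices, as a linear map. -/
def transposeLM (m : ℕ) : Matrix (Fin m) (Fin m) ℂ →ₗ[ℂ] Matrix (Fin m) (Fin m) ℂ where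
  toFun x := xᵀ
  map_add' x y := Matrix.transpose_add x y
  map_smul' c x := by simp

namespace IdExposedAux

variable {r : ℕ}

/-- The rank-one matrix `ξ ηᴴ`. -/
abbrev rk (ξ η : Fin r → ℂ) : Matrix (Fin r) (Fin r) ℂ := Matrix.vecMulVec ξ (star η)

lemma rk_mulVec (ξ η v : Fin r → ℂ) : rk ξ η *ᵥ v = (star η ⬝ᵥ v) • ξ := by
  funext i
  simp [Matrix.mulVec, vecMulVec_apply, dotProduct, Finset.sum_mul, Finset.mul_sum]
  congr 1; funext j; ring

lemma rk_posSemidef (ξ : Fin r → ℂ) : (rk ξ ξ).PosSemidef := by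
  refine posSemidef_iff_dotProduct_mulVec.mpr ⟨?_, ?_⟩
  · ext i j
    simp [Matrix.conjTranspose_apply, vecMulVec_apply, mul_comm]
  · intro v
    rw [rk_mulVec, dotProduct_smul]
    have h1 : star v ⬝ᵥ ξ = star (star ξ ⬝ᵥ v) := star_dotProduct _ _
    rw [smul_eq_mul, h1]
    exact mul_star_self_nonneg ((star ξ ⬝ᵥ v : ℂ))

/-- A PSD matrix whose quadratic form vanishes on the orthogonal complement of `ξ ≠ 0`
is a nonnegative multiple of `ξ ξᴴ`. -/
lemma structure_lemma {M : Matrix (Fin r) (Fin r) ℂ} (hM : M.PosSemidef)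
    {ξ : Fin r → ℂ} (hξ : ξ ≠ 0)
    (h : ∀ v, star ξ ⬝ᵥ v = 0 → star v ⬝ᵥ M *ᵥ v = 0) :
    ∃ c : ℂ, 0 ≤ c ∧ M = c • rk ξ ξ := by
  set s : ℂ := star ξ ⬝ᵥ ξ with hs
  have hs0 : s ≠ 0 := fun h' => hξ (dotProduct_star_self_eq_zero.mp h')
  have hker : ∀ v, star ξ ⬝ᵥ v = 0 → M *ᵥ v = 0 := fun v hv =>
    (hM.dotProduct_mulVec_zero_iff v).mp (h v hv)
  have hperp : ∀ v : Fin r → ℂ, star ξ ⬝ᵥ (v - ((star ξ ⬝ᵥ v) / s) • ξ) = 0 := by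
    intro v
    rw [dotProduct_sub, dotProduct_smul, smul_eq_mul, ← hs]
    field_simp
    ring
  have hdec : ∀ v : Fin r → ℂ, M *ᵥ v = ((star ξ ⬝ᵥ v) / s) • (M *ᵥ ξ) := by
    intro v
    have h0 := hker _ (hperp v)
    rw [Matrix.mulVec_sub, Matrix.mulVec_smul, sub_eq_zero] at h0
    exact h0
  set q : ℂ := star ξ ⬝ᵥ M *ᵥ ξ with hq
  have hq0 : 0 ≤ q := hM.dotProduct_mulVec_nonneg ξ
  set ζ : Fin r → ℂ := M *ᵥ ξ - (q / s) • ξ with hζ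
  have hζperp : star ξ ⬝ᵥ ζ = 0 := by
    rw [hζ, dotProduct_sub, dotProduct_smul, smul_eq_mul, ← hq, ← hs]
    field_simp
    ring
  have hζM : M *ᵥ ζ = 0 := hker _ hζperp
  have hζzero : ζ = 0 := by
    have h1 : star ζ ⬝ᵥ ξ = 0 := by
      rw [star_dotProduct, hζperp, star_zero]
    have h2 : star ζ ⬝ᵥ (M *ᵥ ξ) = 0 := by
      rw [dotProduct_mulVec]
      have hvm : star ζ ᵥ* M = 0 := by
        have hst := congrArg star hζM
        rwa [Matrix.star_mulVec, hM.1, star_zero] at hst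
      rw [hvm, zero_dotProduct]
    have h3 : star ζ ⬝ᵥ ζ = 0 := by
      rw [hζ, dotProduct_sub, h2, dotProduct_smul, h1, smul_zero, sub_zero]
    exact dotProduct_star_self_eq_zero.mp h3
  have hMξ : M *ᵥ ξ = (q / s) • ξ := sub_eq_zero.mp (hζ ▸ hζzero)
  refine ⟨q / s ^ 2, ?_, ?_⟩
  · have hs_nonneg : 0 ≤ s := dotProduct_star_self_nonneg ξ
    obtain ⟨hsre, hsim⟩ := Complex.le_def.mp hs_nonneg
    obtain ⟨hqre, hqim⟩ := Complex.le_def.mp hq0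
    simp only [Complex.zero_re, Complex.zero_im] at hsre hsim hqre hqim
    have hsc : s = (s.re : ℂ) := by
      rw [Complex.ext_iff]; simp [← hsim]
    have hqc : q = (q.re : ℂ) := by
      rw [Complex.ext_iff]; simp [← hqim]
    rw [hsc, hqc, ← Complex.ofReal_pow, ← Complex.ofReal_div, Complex.zero_le_real]
    positivity
  · ext i j
    have h1 := congrFun (hdec (Pi.single j 1)) i
    rw [Matrix.mulVec_single] at h1
    have h2 : star ξ ⬝ᵥ Pi.single j 1 = star (ξ j) := by
      simp [dotProduct, Pi.single_apply]
    rw [hMξ] at h1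
    simp only [MulOpposite.op_one, one_smul, Matrix.col_apply] at h1
    rw [h1, h2]
    simp [Matrix.smul_apply, vecMulVec_apply, smul_eq_mul, Pi.smul_apply]
    ring

/-- If `ζ` is not a multiple of `ξ ≠ 0`, there is a vector orthogonal to `ξ`
but not to `ζ`. -/
lemma exists_perp {ξ ζ : Fin r → ℂ} (hξ : ξ ≠ 0) (h : ∀ μ : ℂ, ζ ≠ μ • ξ) :
    ∃ v, star ξ ⬝ᵥ v = 0 ∧ star ζ ⬝ᵥ v ≠ 0 := by
  set s : ℂ := star ξ ⬝ᵥ ξ with hs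
  have hs0 : s ≠ 0 := fun h' => hξ (dotProduct_star_self_eq_zero.mp h')
  set v : Fin r → ℂ := ζ - ((star ξ ⬝ᵥ ζ) / s) • ξ with hv
  have hv0 : v ≠ 0 := by
    intro h0
    exact h ((star ξ ⬝ᵥ ζ) / s) (by rw [← sub_eq_zero]; exact h0)
  have hperp : star ξ ⬝ᵥ v = 0 := by
    rw [hv, dotProduct_sub, dotProduct_smul, smul_eq_mul, ← hs]
    field_simp
    ring
  refine ⟨v, hperp, ?_⟩
  have h1 : star v ⬝ᵥ ξ = 0 := by rw [star_dotProduct, hperp, star_zero]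
  have h2 : star v ⬝ᵥ ζ = star v ⬝ᵥ v := by
    have hζv : ζ = v + ((star ξ ⬝ᵥ ζ) / s) • ξ := by rw [hv]; ring_nf
    rw [hζv, dotProduct_add, dotProduct_smul, h1, smul_zero, add_zero]
  rw [star_dotProduct]
  intro hcon
  have h3 : star v ⬝ᵥ ζ = 0 := by
    have h4 := congrArg star hcon
    rwa [star_star, star_zero] at h4
  rw [h2] at h3
  exact hv0 (dotProduct_star_self_eq_zero.mp h3)

lemma qform_rk (ρ τ v : Fin r → ℂ) :
    star v ⬝ᵥ (rk ρ τ *ᵥ v) = (star τ ⬝ᵥ v) * (star v ⬝ᵥ ρ) := by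
  rw [rk_mulVec, dotProduct_smul, smul_eq_mul]

lemma rk_add_self (ξ η : Fin r → ℂ) :
    rk (ξ + η) (ξ + η) = rk ξ ξ + rk η η + (rk ξ η + rk η ξ) := by
  ext i j
  simp [vecMulVec_apply, Pi.add_apply, Matrix.add_apply]
  ring

lemma rk_sub_self (ξ η : Fin r → ℂ) :
    rk (ξ - η) (ξ - η) = rk ξ ξ + rk η η - (rk ξ η + rk η ξ) := by
  ext i j
  simp [vecMulVec_apply, Pi.sub_apply, Matrix.sub_apply, Matrix.add_apply]
  ring

lemma rk_smul_left (μ : ℂ) (ξ η : Fin r → ℂ) : rk (μ • ξ) η = μ • rk ξ η := by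
  ext i j
  simp [vecMulVec_apply]
  ring

lemma rk_smul_right (μ : ℂ) (ξ η : Fin r → ℂ) : rk ξ (μ • η) = (star μ) • rk ξ η := by
  ext i j
  simp [vecMulVec_apply]
  ring

lemma rk_zero (η : Fin r → ℂ) : rk (0 : Fin r → ℂ) η = 0 := by
  ext i j
  simp [vecMulVec_apply]

lemma hstd (i j : Fin r) (a : ℂ) :
    Matrix.single i j a = a • rk (Pi.single i 1 : Fin r → ℂ) (Pi.single j 1 : Fin r → ℂ) := by
  have h1 : star (Pi.single j 1 : Fin r → ℂ) = (Pi.single j 1 : Fin r → ℂ) := by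
    funext k
    rcases eq_or_ne k j with rfl | hk
    · simp
    · simp [Pi.single_apply, hk]
  rw [rk, h1, ← single_eq_single_vecMulVec_single]
  ext i' j'
  simp [Matrix.single]

end IdExposedAux

/-- For every `r ≥ 1`, the identity map on `M_r(ℂ)` generates an exposed ray of the
cone of positive linear maps from `M_r(ℂ)` to `M_r(ℂ)`. -/
theorem id_isExposed (r : ℕ) (hr : 1 ≤ r) :
    IsExposedMap (LinearMap.id : Matrix (Fin r) (Fin r) ℂ →ₗ[ℂ] Matrix (Fin r) (Fin r) ℂ) := by
  classical
  open IdExposedAux in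
  constructor
  · intro a ha
    simpa using ha
  intro ψ hψ hcond
  set i0 : Fin r := ⟨0, hr⟩ with hi0
  set ξ₀ : Fin r → ℂ := Pi.single i0 1 with hξ₀def
  have hξ₀ : ξ₀ ≠ 0 := by
    intro h0
    have h1 := congrFun h0 i0
    simp [hξ₀def] at h1
  have key : ∀ ξ : Fin r → ℂ, ξ ≠ 0 →
      ∃ c : ℂ, 0 ≤ c ∧ ψ (rk ξ ξ) = c • rk ξ ξ := by
    intro ξ hξ
    refine structure_lemma (hψ _ (rk_posSemidef ξ)) hξ ?_
    intro v hv
    refine hcond _ (rk_posSemidef ξ) v ?_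
    show star v ⬝ᵥ (LinearMap.id (rk ξ ξ) : Matrix (Fin r) (Fin r) ℂ) *ᵥ v = 0
    rw [LinearMap.id_apply, rk_mulVec, hv, zero_smul, dotProduct_zero]
  obtain ⟨c₀, hc₀nonneg, hc₀⟩ := key ξ₀ hξ₀
  have hrk00 : rk ξ₀ ξ₀ i0 i0 = 1 := by
    simp [hξ₀def, vecMulVec_apply]
  have hconst : ∀ ξ : Fin r → ℂ, ψ (rk ξ ξ) = c₀ • rk ξ ξ := by
    intro ξ
    by_cases hξ : ξ = 0
    · subst hξ
      rw [rk_zero, map_zero, smul_zero]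
    obtain ⟨c, hcn, hc⟩ := key ξ hξ
    suffices hcc : c = c₀ by rw [hc, hcc]
    by_cases hdep : ∃ μ : ℂ, ξ = μ • ξ₀
    · obtain ⟨μ, rfl⟩ := hdep
      have hμ : μ ≠ 0 := by rintro rfl; simp at hξ
      have hscale : rk (μ • ξ₀) (μ • ξ₀) = (μ * star μ) • rk ξ₀ ξ₀ := by
        rw [rk_smul_left, rk_smul_right, smul_smul]
      have e1 : c • ((μ * star μ) • rk ξ₀ ξ₀)
          = (μ * star μ) • (c₀ • rk ξ₀ ξ₀) := by
        rw [← hscale, ← hc, hscale, _root_.map_smul, hc₀]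
      have e2 := congrFun (congrFun e1 i0) i0
      simp only [Matrix.smul_apply, hrk00, smul_eq_mul, mul_one] at e2
      have hμμ : μ * star μ ≠ 0 := mul_ne_zero hμ (star_ne_zero.mpr hμ)
      have e3 : μ * star μ * c = μ * star μ * c₀ := by linear_combination e2
      exact mul_left_cancel₀ hμμ e3
    · have hdep' : ∀ μ : ℂ, ξ₀ ≠ μ • ξ := by
        intro μ hμeq
        have hμ : μ ≠ 0 := by
          rintro rfl; rw [zero_smul] at hμeq; exact hξ₀ hμeq
        exact hdep ⟨μ⁻¹, by rw [hμeq, smul_smul, inv_mul_cancel₀ hμ, one_smul]⟩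
      obtain ⟨v, hvperp, hvne⟩ := exists_perp hξ hdep'
      obtain ⟨w, hwperp, hwne⟩ := exists_perp hξ₀ (fun μ h => hdep ⟨μ, h⟩)
      have hplus : ξ₀ + ξ ≠ 0 := by
        intro h0
        have : ξ = -ξ₀ := eq_neg_of_add_eq_zero_right h0
        exact hdep ⟨-1, by rw [this, neg_one_smul]⟩
      have hminus : ξ₀ - ξ ≠ 0 := by
        intro h0
        have : ξ₀ = ξ := sub_eq_zero.mp h0
        exact hdep ⟨1, by rw [one_smul, this]⟩
      obtain ⟨cp, hcpn, hcp⟩ := key _ hplus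
      obtain ⟨cm, hcmn, hcm⟩ := key _ hminus
      have hsum : rk (ξ₀ + ξ) (ξ₀ + ξ) + rk (ξ₀ - ξ) (ξ₀ - ξ)
          = (2:ℂ) • rk ξ₀ ξ₀ + (2:ℂ) • rk ξ ξ := by
        rw [rk_add_self, rk_sub_self]
        ext i j
        simp [Matrix.add_apply, Matrix.sub_apply, Matrix.smul_apply, vecMulVec_apply]
        ring
      have e1 : cp • rk (ξ₀+ξ) (ξ₀+ξ) + cm • rk (ξ₀-ξ) (ξ₀-ξ)
          = (2:ℂ) • (c₀ • rk ξ₀ ξ₀) + (2:ℂ) • (c • rk ξ ξ) := by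
        calc cp • rk (ξ₀+ξ) (ξ₀+ξ) + cm • rk (ξ₀-ξ) (ξ₀-ξ)
            = ψ (rk (ξ₀+ξ) (ξ₀+ξ)) + ψ (rk (ξ₀-ξ) (ξ₀-ξ)) := by rw [hcp, hcm]
          _ = ψ (rk (ξ₀+ξ) (ξ₀+ξ) + rk (ξ₀-ξ) (ξ₀-ξ)) := (map_add ψ _ _).symm
          _ = ψ ((2:ℂ) • rk ξ₀ ξ₀ + (2:ℂ) • rk ξ ξ) := by rw [hsum]
          _ = (2:ℂ) • (c₀ • rk ξ₀ ξ₀) + (2:ℂ) • (c • rk ξ ξ) := by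
              rw [map_add, _root_.map_smul, _root_.map_smul, hc₀, hc]
      -- evaluate the quadratic form at v (orthogonal to ξ, not to ξ₀)
      have hvconj : star v ⬝ᵥ ξ = 0 := by rw [star_dotProduct, hvperp, star_zero]
      have h_v := congrArg (fun X : Matrix (Fin r) (Fin r) ℂ => star v ⬝ᵥ X *ᵥ v) e1
      simp only [Matrix.add_mulVec, Matrix.smul_mulVec, dotProduct_add,
        dotProduct_smul, qform_rk, smul_eq_mul, star_add, star_sub, add_dotProduct,
        sub_dotProduct, dotProduct_sub, hvperp, hvconj] at h_v
      have hvv : (star ξ₀ ⬝ᵥ v) * (star v ⬝ᵥ ξ₀) ≠ 0 := by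
        apply mul_ne_zero hvne
        intro h0
        apply hvne
        rw [star_dotProduct, h0, star_zero]
      have heqv : (cp + cm) * ((star ξ₀ ⬝ᵥ v) * (star v ⬝ᵥ ξ₀))
          = (2 * c₀) * ((star ξ₀ ⬝ᵥ v) * (star v ⬝ᵥ ξ₀)) := by
        linear_combination h_v
      have hv2 : cp + cm = 2 * c₀ := mul_right_cancel₀ hvv heqv
      -- evaluate the quadratic form at w (orthogonal to ξ₀, not to ξ)
      have hwconj : star w ⬝ᵥ ξ₀ = 0 := by rw [star_dotProduct, hwperp, star_zero]
      have h_w := congrArg (fun X : Matrix (Fin r) (Fin r) ℂ => star w ⬝ᵥ X *ᵥ w) e1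
      simp only [Matrix.add_mulVec, Matrix.smul_mulVec, dotProduct_add,
        dotProduct_smul, qform_rk, smul_eq_mul, star_add, star_sub, add_dotProduct,
        sub_dotProduct, dotProduct_sub, hwperp, hwconj] at h_w
      have hww : (star ξ ⬝ᵥ w) * (star w ⬝ᵥ ξ) ≠ 0 := by
        apply mul_ne_zero hwne
        intro h0
        apply hwne
        rw [star_dotProduct, h0, star_zero]
      have heqw : (cp + cm) * ((star ξ ⬝ᵥ w) * (star w ⬝ᵥ ξ))
          = (2 * c) * ((star ξ ⬝ᵥ w) * (star w ⬝ᵥ ξ)) := by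
        linear_combination h_w
      have hw2 : cp + cm = 2 * c := mul_right_cancel₀ hww heqw
      linear_combination hv2 / 2 - hw2 / 2
  -- polarization: ψ agrees with c₀ • id on all rank-one matrices
  have step1 : ∀ ξ η : Fin r → ℂ, ψ (rk ξ η + rk η ξ) = c₀ • (rk ξ η + rk η ξ) := by
    intro ξ η
    have e : c₀ • (rk ξ ξ + rk η η + (rk ξ η + rk η ξ))
        = c₀ • rk ξ ξ + c₀ • rk η η + ψ (rk ξ η + rk η ξ) := by
      rw [← rk_add_self, ← hconst (ξ + η), rk_add_self, map_add, map_add,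
        hconst ξ, hconst η]
    rw [smul_add, smul_add] at e
    exact (add_left_cancel e).symm
  have step2 : ∀ ξ η : Fin r → ℂ, ψ (rk ξ η - rk η ξ) = c₀ • (rk ξ η - rk η ξ) := by
    intro ξ η
    have h1 := step1 ξ (Complex.I • η)
    rw [rk_smul_right, rk_smul_left] at h1
    have hsI : (star Complex.I) = -Complex.I := by
      simp [Complex.star_def, Complex.conj_I]
    rw [hsI] at h1
    have h2 := congrArg (fun X : Matrix (Fin r) (Fin r) ℂ => Complex.I • X) h1
    rw [← _root_.map_smul] at h2
    have hmm1 : Complex.I * -Complex.I = 1 := by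
      rw [mul_neg, Complex.I_mul_I, neg_neg]
    have hcomb : Complex.I • ((-Complex.I) • rk ξ η + Complex.I • rk η ξ)
        = rk ξ η - rk η ξ := by
      rw [smul_add, smul_smul, smul_smul, hmm1, Complex.I_mul_I, one_smul,
        neg_one_smul, ← sub_eq_add_neg]
    rw [hcomb, smul_comm, hcomb] at h2
    exact h2
  have hrkall : ∀ ξ η : Fin r → ℂ, ψ (rk ξ η) = c₀ • rk ξ η := by
    intro ξ η
    have hadd : (rk ξ η + rk η ξ) + (rk ξ η - rk η ξ) = (2:ℂ) • rk ξ η := by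
      have h2 : ((2:ℂ) • rk ξ η : Matrix (Fin r) (Fin r) ℂ) = rk ξ η + rk ξ η :=
        two_smul ℂ _
      rw [h2]
      abel
    have e : ψ ((rk ξ η + rk η ξ) + (rk ξ η - rk η ξ))
        = c₀ • ((rk ξ η + rk η ξ) + (rk ξ η - rk η ξ)) := by
      rw [map_add, step1, step2, ← smul_add]
    rw [hadd, _root_.map_smul] at e
    have e2 : (2:ℂ) • ψ (rk ξ η) = (2:ℂ) • (c₀ • rk ξ η) := by
      rw [e, smul_comm]
    exact smul_right_injective _ (two_ne_zero) e2
  have hψx : ∀ x : Matrix (Fin r) (Fin r) ℂ, ψ x = c₀ • x := by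
    intro x
    have hterm : ∀ i j : Fin r, ψ (Matrix.single i j (x i j))
        = c₀ • Matrix.single i j (x i j) := by
      intro i j
      rw [hstd, _root_.map_smul, hrkall, smul_comm, ← hstd]
    conv_lhs => rw [matrix_eq_sum_single x]
    rw [map_sum]
    simp only [map_sum, hterm, ← Finset.smul_sum]
    rw [← matrix_eq_sum_single]
  obtain ⟨hre, him⟩ := Complex.le_def.mp hc₀nonneg
  simp only [Complex.zero_re, Complex.zero_im] at hre him
  refine ⟨c₀.re, hre, ?_⟩
  apply LinearMap.ext
  intro x
  have hrec : (c₀.re : ℂ) = c₀ := by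
    rw [Complex.ext_iff]; simp [← him]
  show ψ x = ((c₀.re : ℂ) • (LinearMap.id : Matrix (Fin r) (Fin r) ℂ →ₗ[ℂ] Matrix (Fin r) (Fin r) ℂ)) x
  rw [LinearMap.smul_apply, LinearMap.id_apply, hrec, hψx]

end
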